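/- Let NSym be the free associative algebra over a commutative ring k on generators H_1, H_2, H_3, … (with H_0 := 1 and H_k := 0 for k < 0). For m ∈ ℕ and α ∈ ℤ^m, set H_α := H_{α_1} H_{α_2} ⋯ H_{α_m} and define the immaculate function 𝔖_α := Σ_{σ ∈ S_m} (-1)^σ H_{(α_1+σ(1)-1, α_2+σ(2)-2, …, α_m+σ(m)-m)}. Then for any n ∈ ℕ, α ∈ ℤ^n, and s ∈ ℤ: 𝔖_α H_s = Σ_β 𝔖_β, where the sum runs over all β ∈ ℤ^{n+1} with |β| = |α| + s, α_i ≤ β_i for all i ∈ [n], and 0 ≤ β_{n+1}. -/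

import Mathlib

/-- The generator H_m of NSym = k⟨H₁, H₂, …⟩ (the free associative algebra on generators
indexed by ℕ, where the generator indexed by i is H_{i+1}), extended by H_0 = 1 and
H_m = 0 for m < 0. -/
noncomputable def Hgen (k : Type*) [CommRing k] (m : ℤ) : FreeAlgebra k ℕ :=
  if 0 < m then FreeAlgebra.ι k (m.toNat - 1) else if m = 0 then 1 else 0

/-- The immaculate function 𝔖_α ∈ NSym for α ∈ ℤ^m:
𝔖_α = Σ_{σ ∈ S_m} (-1)^σ H_{α_1+σ(1)-1} H_{α_2+σ(2)-2} ⋯ H_{α_m+σ(m)-m}. -/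
noncomputable def immac (k : Type*) [CommRing k] {m : ℕ} (α : Fin m → ℤ) :
    FreeAlgebra k ℕ :=
  ∑ σ : Equiv.Perm (Fin m), (Equiv.Perm.sign σ : ℤ) •
    (List.ofFn fun i => Hgen k (α i + ((σ i : ℕ) : ℤ) - ((i : ℕ) : ℤ))).prod

open Finset Equiv

section Aux

private lemma key_det (n : ℕ) (m : Fin (n+1) → ℤ) (hm : (n : ℤ) ≤ m (Fin.last n)) :
    ∑ τ : Equiv.Perm (Fin (n+1)), ((Equiv.Perm.sign τ : ℤ) *
        ∏ j, (if ((τ j : ℕ) : ℤ) ≤ m j then (1:ℤ) else 0))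
      = ∑ σ : Equiv.Perm (Fin n), ((Equiv.Perm.sign σ : ℤ) *
        ∏ j, (if ((σ j : ℕ) : ℤ) = m j.castSucc then (1:ℤ) else 0)) := by
  classical
  set c : Fin (n+1) → ℤ := fun j => min (m j) n with hc
  have hcle : ∀ j, c j ≤ (n:ℤ) := fun j => min_le_right _ _
  have hcm : ∀ j, c j ≤ m j := fun j => min_le_left _ _
  have hcor : ∀ j, c j = m j ∨ c j = (n:ℤ) := fun j => min_choice _ _
  have hclast : c (Fin.last n) = (n:ℤ) := min_eq_right hm
  set U : Matrix (Fin (n+1)) (Fin (n+1)) ℤ :=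
    Matrix.of (fun i j => if (i:ℕ) ≤ (j:ℕ) then 1 else 0) with hU
  set C : Matrix (Fin (n+1)) (Fin (n+1)) ℤ :=
    Matrix.of (fun i j => if ((i:ℕ):ℤ) = c j then 1 else 0) with hCdef
  set A : Matrix (Fin (n+1)) (Fin (n+1)) ℤ :=
    Matrix.of (fun i j => if ((i:ℕ):ℤ) ≤ m j then 1 else 0) with hA
  have hAUC : A = U * C := by
    ext i j
    rw [Matrix.mul_apply]
    have hi : (i:ℕ) ≤ n := Nat.lt_succ_iff.mp i.isLt
    have h2 := hcle j
    have h3 := hcm j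
    by_cases h0 : 0 ≤ c j
    · have hkn : (c j).toNat < n + 1 := by omega
      set k₀ : Fin (n+1) := ⟨(c j).toNat, hkn⟩ with hk₀
      have hck : ((k₀ : ℕ) : ℤ) = c j := by simp only [hk₀]; omega
      rw [Finset.sum_eq_single_of_mem k₀ (mem_univ _)]
      · have hCk : C k₀ j = 1 := by simp [hCdef, hck]
        rw [hCk, mul_one]
        show (if ((i:ℕ):ℤ) ≤ m j then (1:ℤ) else 0) = if (i:ℕ) ≤ (k₀:ℕ) then 1 else 0
        refine if_congr ?_ rfl rfl
        show ((i:ℕ):ℤ) ≤ m j ↔ (i:ℕ) ≤ (c j).toNat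
        rcases hcor j with h | h <;> omega
      · intro k _ hk
        have : ((k:ℕ):ℤ) ≠ c j := by
          intro hkc
          apply hk
          apply Fin.ext
          omega
        simp [hCdef, this]
    · have hAij : A i j = 0 := by
        have : ¬ (((i:ℕ):ℤ) ≤ m j) := by rcases hcor j with h | h <;> omega
        simp [hA, this]
      rw [hAij]
      symm
      apply Finset.sum_eq_zero
      intro k _
      have hk0 : (0:ℤ) ≤ ((k:ℕ):ℤ) := by positivity
      have : ((k:ℕ):ℤ) ≠ c j := by omega
      simp [hCdef, this]
  have hdetU : U.det = 1 := by
    rw [Matrix.det_of_upperTriangular (M := U) (by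
      intro i j hij
      have hji : (j:ℕ) < (i:ℕ) := hij
      simp only [hU, Matrix.of_apply]
      exact if_neg (by omega))]
    simp [hU]
  have hdetA : A.det = C.det := by rw [hAUC, Matrix.det_mul, hdetU, one_mul]
  have hAsum : A.det = ∑ τ : Equiv.Perm (Fin (n+1)), ((Equiv.Perm.sign τ : ℤ) *
      ∏ j, (if ((τ j : ℕ) : ℤ) ≤ m j then (1:ℤ) else 0)) := by
    simp only [Matrix.det_apply', hA, Matrix.of_apply, Int.cast_id]
  have hCsum : C.det = ∑ τ : Equiv.Perm (Fin (n+1)), ((Equiv.Perm.sign τ : ℤ) *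
      ∏ j, (if ((τ j : ℕ) : ℤ) = c j then (1:ℤ) else 0)) := by
    simp only [Matrix.det_apply', hCdef, Matrix.of_apply, Int.cast_id]
  rw [← hAsum, hdetA, hCsum]
  by_cases hex : ∃ σ : Equiv.Perm (Fin n), ∀ j, ((σ j : ℕ) : ℤ) = c j.castSucc
  · obtain ⟨σ₀, hσ₀⟩ := hex
    have hσ₀m : ∀ j, ((σ₀ j : ℕ) : ℤ) = m j.castSucc := by
      intro j
      have h1 : ((σ₀ j : ℕ) : ℤ) < n := by exact_mod_cast Nat.cast_lt.2 (σ₀ j).2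
      have := hσ₀ j
      rcases hcor j.castSucc with h | h <;> omega
    set τ₀ : Equiv.Perm (Fin (n+1)) := Equiv.permCongr finSuccEquivLast.symm σ₀.optionCongr
      with hτ₀
    have hτ₀app : ∀ j : Fin n, τ₀ j.castSucc = (σ₀ j).castSucc := by
      intro j
      simp [hτ₀, Equiv.permCongr_apply]
    have hτ₀last : τ₀ (Fin.last n) = Fin.last n := by
      simp [hτ₀, Equiv.permCongr_apply]
    have hτ₀c : ∀ j, ((τ₀ j : ℕ) : ℤ) = c j := by
      intro j
      induction j using Fin.lastCases with
      | last => rw [hτ₀last, hclast]; simp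
      | cast j => rw [hτ₀app]; simpa using hσ₀ j
    rw [Finset.sum_eq_single_of_mem τ₀ (mem_univ _), Finset.sum_eq_single_of_mem σ₀ (mem_univ _)]
    · rw [Finset.prod_eq_one (fun j _ => if_pos (hσ₀m j)),
        Finset.prod_eq_one (fun j _ => if_pos (hτ₀c j)), mul_one, mul_one, hτ₀]
      rw [Equiv.Perm.sign_permCongr, Equiv.optionCongr_sign]
    · intro σ _ hσ
      have : ∃ x, σ x ≠ σ₀ x := by
        by_contra hno
        push_neg at hno
        exact hσ (Equiv.ext hno)
      obtain ⟨x, hx⟩ := this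
      have hfac : ¬ (((σ x : ℕ) : ℤ) = m x.castSucc) := by
        intro hcontra
        apply hx
        apply Fin.ext
        have := hσ₀m x
        omega
      have hz : (∏ j, (if ((σ j : ℕ) : ℤ) = m j.castSucc then (1:ℤ) else 0)) = 0 :=
        Finset.prod_eq_zero (mem_univ x) (if_neg hfac)
      rw [hz, mul_zero]
    · intro τ _ hτ
      have : ∃ x, τ x ≠ τ₀ x := by
        by_contra hno
        push_neg at hno
        exact hτ (Equiv.ext hno)
      obtain ⟨x, hx⟩ := this
      have hfac : ¬ (((τ x : ℕ) : ℤ) = c x) := by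
        intro hcontra
        apply hx
        apply Fin.ext
        have := hτ₀c x
        omega
      have hz : (∏ j, (if ((τ j : ℕ) : ℤ) = c j then (1:ℤ) else 0)) = 0 :=
        Finset.prod_eq_zero (mem_univ x) (if_neg hfac)
      rw [hz, mul_zero]
  · rw [Finset.sum_eq_zero, Finset.sum_eq_zero]
    · intro σ _
      have : ∃ j, ¬ (((σ j : ℕ) : ℤ) = c j.castSucc) := by
        by_contra hno
        push_neg at hno
        exact hex ⟨σ, hno⟩
      obtain ⟨j, hj⟩ := this
      have hfac : ¬ (((σ j : ℕ) : ℤ) = m j.castSucc) := by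
        intro hcontra
        apply hj
        have h1 : ((σ j : ℕ) : ℤ) < n := by exact_mod_cast Nat.cast_lt.2 (σ j).2
        have := hcm j.castSucc
        have := hcle j.castSucc
        rcases hcor j.castSucc with h | h <;> omega
      have hz : (∏ j, (if ((σ j : ℕ) : ℤ) = m j.castSucc then (1:ℤ) else 0)) = 0 :=
        Finset.prod_eq_zero (mem_univ j) (if_neg hfac)
      rw [hz, mul_zero]
    · intro τ _
      by_cases hall : ∀ j, ((τ j : ℕ) : ℤ) = c j
      · exfalso
        have hτlast : τ (Fin.last n) = Fin.last n := by
          apply Fin.ext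
          have := hall (Fin.last n)
          rw [hclast] at this
          simpa using this
        set e' : Equiv.Perm (Option (Fin n)) := Equiv.permCongr finSuccEquivLast τ with he'
        apply hex
        refine ⟨Equiv.removeNone e', fun j => ?_⟩
        have hne : τ j.castSucc ≠ Fin.last n := by
          intro hcontra
          have := τ.injective (hcontra.trans hτlast.symm)
          exact (Fin.castSucc_lt_last j).ne this
        obtain ⟨j', hj'⟩ := Fin.exists_castSucc_eq.mpr hne
        have he'some : e' (some j) = some j' := by
          simp [he', Equiv.permCongr_apply, ← hj']
        have hsome : some (Equiv.removeNone e' j) = e' (some j) :=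
          Equiv.removeNone_some _ ⟨j', he'some⟩
        rw [he'some] at hsome
        have hjj : Equiv.removeNone e' j = j' := Option.some_injective _ hsome
        rw [hjj]
        have h2 := hall j.castSucc
        rw [← hj'] at h2
        simpa using h2
      · push_neg at hall
        obtain ⟨j, hj⟩ := hall
        have hz : (∏ j, (if ((τ j : ℕ) : ℤ) = c j then (1:ℤ) else 0)) = 0 :=
          Finset.prod_eq_zero (mem_univ j) (if_neg hj)
        rw [hz, mul_zero]


private lemma coef_eq {n : ℕ} (α : Fin n → ℤ) (L γ : Fin n.succ → ℤ)
    (hLcast : ∀ i : Fin n, L i.castSucc = α i) (hLlast : L (Fin.last n) = 0)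
    (hlast : 0 ≤ γ (Fin.last n)) :
    ∑ τ : Equiv.Perm (Fin (n+1)), ((Equiv.Perm.sign τ : ℤ) *
        ∏ i, (if L i + ((τ i : ℕ) : ℤ) - ((i : ℕ) : ℤ) ≤ γ i then (1:ℤ) else 0))
      = ∑ σ : Equiv.Perm (Fin n), ((Equiv.Perm.sign σ : ℤ) *
        ∏ i, (if γ i.castSucc = α i + ((σ i : ℕ) : ℤ) - ((i : ℕ) : ℤ) then (1:ℤ) else 0)) := by
  have hm : (n : ℤ) ≤ (fun i => γ i - L i + ((i : ℕ) : ℤ)) (Fin.last n) := by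
    simp only [hLlast, Fin.val_last]
    omega
  have h1 : ∀ (τ : Equiv.Perm (Fin (n+1))) (i : Fin (n+1)),
      (if L i + ((τ i : ℕ) : ℤ) - ((i : ℕ) : ℤ) ≤ γ i then (1:ℤ) else 0)
        = (if ((τ i : ℕ) : ℤ) ≤ γ i - L i + ((i : ℕ) : ℤ) then (1:ℤ) else 0) :=
    fun τ i => if_congr (by omega) rfl rfl
  have h2 : ∀ (σ : Equiv.Perm (Fin n)) (i : Fin n),
      (if ((σ i : ℕ) : ℤ) = γ i.castSucc - L i.castSucc + ((i.castSucc : ℕ) : ℤ) then (1:ℤ) else 0)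
        = (if γ i.castSucc = α i + ((σ i : ℕ) : ℤ) - ((i : ℕ) : ℤ) then (1:ℤ) else 0) := by
    intro σ i
    rw [hLcast, Fin.coe_castSucc]
    exact if_congr (by omega) rfl rfl
  simp only [h1]
  rw [key_det n (fun i => γ i - L i + ((i : ℕ) : ℤ)) hm]
  simp only [h2]

private lemma upper_bound {n : ℕ} (L β : Fin n.succ → ℤ) (hL : ∀ i, L i ≤ β i)
    (i : Fin n.succ) : β i ≤ L i + ((∑ j, β j) - ∑ j, L j) := by
  have h1 : ∑ j ∈ Finset.univ.erase i, L j ≤ ∑ j ∈ Finset.univ.erase i, β j :=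
    Finset.sum_le_sum fun j _ => hL j
  have h2 : β i + ∑ j ∈ Finset.univ.erase i, β j = ∑ j, β j :=
    Finset.add_sum_erase _ _ (Finset.mem_univ i)
  have h3 : L i + ∑ j ∈ Finset.univ.erase i, L j = ∑ j, L j :=
    Finset.add_sum_erase _ _ (Finset.mem_univ i)
  omega

private lemma sum_perm_coe {m : ℕ} (τ : Equiv.Perm (Fin m)) :
    ∑ i, ((τ i : ℕ) : ℤ) = ∑ i : Fin m, ((i : ℕ) : ℤ) :=
  Equiv.sum_comp τ (fun j => ((j : ℕ) : ℤ))

private lemma sum_shifted {m : ℕ} (β : Fin m → ℤ) (τ : Equiv.Perm (Fin m)) :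
    ∑ i, (β i + ((τ i : ℕ) : ℤ) - ((i : ℕ) : ℤ)) = ∑ i, β i := by
  rw [Finset.sum_sub_distrib, Finset.sum_add_distrib, sum_perm_coe]
  ring

end Aux

/-- The right-Pieri rule for immaculate functions:
𝔖_α · H_s = Σ_{β ∈ ℤ^{n+1}, |β| = |α| + s, α_i ≤ β_i (i ∈ [n]), 0 ≤ β_{n+1}} 𝔖_β. -/
theorem immaculate_right_pieri (k : Type*) [CommRing k] (n : ℕ)
    (α : Fin n → ℤ) (s : ℤ) :
    immac k α * Hgen k s
      = ∑ᶠ (β : Fin (n + 1) → ℤ)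
          (_ : (∑ i, β i = (∑ i, α i) + s)
            ∧ (∀ i : Fin n, α i ≤ β i.castSucc)
            ∧ 0 ≤ β (Fin.last n)),
          immac k β := by
  classical
  set L : Fin (n+1) → ℤ := Fin.snoc α 0 with hLdef
  have hLcast : ∀ i : Fin n, L i.castSucc = α i := fun i => Fin.snoc_castSucc _ _ _
  have hLlast : L (Fin.last n) = 0 := Fin.snoc_last _ _
  set N : ℤ := (∑ i, α i) + s with hN
  have hsumL : ∑ i, L i = ∑ i, α i := by
    rw [Fin.sum_univ_castSucc]
    simp only [hLcast, hLlast, add_zero]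
  set G : Finset (Fin (n+1) → ℤ) :=
    (Fintype.piFinset fun i => Finset.Icc (L i - (n:ℤ)) (L i + max s 0 + (n:ℤ))).filter
      (fun γ => ∑ i, γ i = N) with hG
  set t : Finset (Fin (n+1) → ℤ) := G.filter (fun β => ∀ i, L i ≤ β i) with ht
  have hmemG : ∀ γ, γ ∈ G ↔
      ((∀ i, L i - (n:ℤ) ≤ γ i ∧ γ i ≤ L i + max s 0 + (n:ℤ)) ∧ ∑ i, γ i = N) := by
    intro γ
    simp only [hG, Finset.mem_filter, Fintype.mem_piFinset, Finset.mem_Icc]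
  have hmemt : ∀ β, β ∈ t ↔ ((∑ i, β i = N) ∧ ∀ i, L i ≤ β i) := by
    intro β
    rw [ht, Finset.mem_filter, hmemG]
    constructor
    · rintro ⟨⟨_, h2⟩, h3⟩; exact ⟨h2, h3⟩
    · rintro ⟨h1, h2⟩
      refine ⟨⟨fun i => ?_, h1⟩, h2⟩
      have hub := upper_bound L β h2 i
      rw [h1, hN, hsumL] at hub
      have h4 : s ≤ max s 0 := le_max_left _ _
      have h5 : (0:ℤ) ≤ max s 0 := le_max_right _ _
      have h6 := h2 i
      constructor <;> omega
  -- step 1 : finsum to Finset sum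
  rw [finsum_cond_eq_sum_of_cond_iff (fun β => immac k β) (t := t)
    (fun {β} _ => by
      rw [hmemt β, hN]
      constructor
      · rintro ⟨h1, h2, h3⟩
        refine ⟨h1, fun i => ?_⟩
        induction i using Fin.lastCases with
        | last => rw [hLlast]; exact h3
        | cast i => rw [hLcast]; exact h2 i
      · rintro ⟨h1, h2⟩
        refine ⟨h1, fun i => ?_, ?_⟩
        · have := h2 i.castSucc; rwa [hLcast] at this
        · have := h2 (Fin.last n); rwa [hLlast] at this)]
  -- notation
  set Hp : (Fin (n+1) → ℤ) → FreeAlgebra k ℕ :=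
    fun γ => (List.ofFn fun i => Hgen k (γ i)).prod with hHp
  have himmac : ∀ β : Fin (n+1) → ℤ, immac k β
      = ∑ τ : Equiv.Perm (Fin (n+1)), (Equiv.Perm.sign τ : ℤ) •
          Hp (fun i => β i + ((τ i : ℕ) : ℤ) - ((i : ℕ) : ℤ)) := fun β => rfl
  have hHp0 : ∀ γ : Fin (n+1) → ℤ, ∀ j : Fin (n+1), γ j < 0 → Hp γ = 0 := by
    intro γ j hj
    have hz : Hgen k (γ j) = 0 := by
      rw [Hgen, if_neg (by omega), if_neg (by omega)]
    refine List.prod_eq_zero ?_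
    rw [List.mem_ofFn]
    exact ⟨j, hz⟩
  -- LHS
  have hLHS : immac k α * Hgen k s
      = ∑ σ : Equiv.Perm (Fin n), (Equiv.Perm.sign σ : ℤ) •
          Hp (Fin.snoc (fun i => α i + ((σ i : ℕ) : ℤ) - ((i : ℕ) : ℤ)) s) := by
    rw [immac, Finset.sum_mul]
    refine Finset.sum_congr rfl fun σ _ => ?_
    rw [smul_mul_assoc]
    congr 1
    simp only [hHp]
    rw [List.ofFn_succ', List.prod_concat]
    simp only [Fin.snoc_castSucc, Fin.snoc_last]
  rw [hLHS]
  -- RHS chain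
  have step2 : ∑ β ∈ t, immac k β
      = ∑ τ : Equiv.Perm (Fin (n+1)), ∑ β ∈ t, (Equiv.Perm.sign τ : ℤ) •
          Hp (fun i => β i + ((τ i : ℕ) : ℤ) - ((i : ℕ) : ℤ)) := by
    simp only [himmac]
    rw [Finset.sum_comm]
  have step3 : ∀ τ : Equiv.Perm (Fin (n+1)),
      ∑ β ∈ t, (Equiv.Perm.sign τ : ℤ) •
          Hp (fun i => β i + ((τ i : ℕ) : ℤ) - ((i : ℕ) : ℤ))
        = ∑ γ ∈ G, (if ∀ i, L i + ((τ i : ℕ) : ℤ) - ((i : ℕ) : ℤ) ≤ γ i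
            then (Equiv.Perm.sign τ : ℤ) • Hp γ else 0) := by
    intro τ
    rw [← Finset.sum_filter]
    refine Finset.sum_nbij' (i := fun β => fun i => β i + ((τ i : ℕ) : ℤ) - ((i : ℕ) : ℤ))
      (j := fun γ => fun i => γ i - ((τ i : ℕ) : ℤ) + ((i : ℕ) : ℤ)) ?_ ?_ ?_ ?_ ?_
    · intro β hβ
      rw [hmemt] at hβ
      obtain ⟨h1, h2⟩ := hβ
      rw [Finset.mem_filter, hmemG]
      refine ⟨⟨fun i => ?_, ?_⟩, fun i => ?_⟩
      · show L i - (n:ℤ) ≤ β i + ((τ i : ℕ) : ℤ) - ((i : ℕ) : ℤ)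
          ∧ β i + ((τ i : ℕ) : ℤ) - ((i : ℕ) : ℤ) ≤ L i + max s 0 + (n:ℤ)
        have hub := upper_bound L β h2 i
        rw [h1, hN, hsumL] at hub
        have h4 : s ≤ max s 0 := le_max_left _ _
        have h5 : (0:ℤ) ≤ max s 0 := le_max_right _ _
        have h6 := h2 i
        have h7 : (τ i : ℕ) ≤ n := Fin.is_le _
        have h8 : (i : ℕ) ≤ n := Fin.is_le _
        constructor <;> omega
      · show ∑ i, (β i + ((τ i : ℕ) : ℤ) - ((i : ℕ) : ℤ)) = N
        rw [sum_shifted, h1]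
      · show L i + ((τ i : ℕ) : ℤ) - ((i : ℕ) : ℤ) ≤ β i + ((τ i : ℕ) : ℤ) - ((i : ℕ) : ℤ)
        have := h2 i
        omega
    · intro γ hγ
      rw [Finset.mem_filter, hmemG] at hγ
      obtain ⟨⟨_, h1⟩, h2⟩ := hγ
      rw [hmemt]
      refine ⟨?_, fun i => ?_⟩
      · show ∑ i, (γ i - ((τ i : ℕ) : ℤ) + ((i : ℕ) : ℤ)) = N
        have e1 : ∑ i, (γ i - ((τ i : ℕ) : ℤ) + ((i : ℕ) : ℤ))
            = ∑ i, γ i - ∑ i, ((τ i : ℕ) : ℤ) + ∑ i : Fin (n+1), ((i : ℕ) : ℤ) := by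
          rw [Finset.sum_add_distrib, Finset.sum_sub_distrib]
        rw [e1, sum_perm_coe, h1]
        ring
      · show L i ≤ γ i - ((τ i : ℕ) : ℤ) + ((i : ℕ) : ℤ)
        have := h2 i
        omega
    · intro β _
      funext i
      show β i + ((τ i : ℕ) : ℤ) - ((i : ℕ) : ℤ) - ((τ i : ℕ) : ℤ) + ((i : ℕ) : ℤ) = β i
      ring
    · intro γ _
      funext i
      show γ i - ((τ i : ℕ) : ℤ) + ((i : ℕ) : ℤ) + ((τ i : ℕ) : ℤ) - ((i : ℕ) : ℤ) = γ i
      ring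
    · intro β _
      rfl
  have step4 : ∀ γ ∈ G, ∀ τ : Equiv.Perm (Fin (n+1)),
      (if ∀ i, L i + ((τ i : ℕ) : ℤ) - ((i : ℕ) : ℤ) ≤ γ i
          then (Equiv.Perm.sign τ : ℤ) • Hp γ else 0)
        = ((Equiv.Perm.sign τ : ℤ) *
            ∏ i, (if L i + ((τ i : ℕ) : ℤ) - ((i : ℕ) : ℤ) ≤ γ i then (1:ℤ) else 0)) • Hp γ := by
    intro γ _ τ
    by_cases h : ∀ i, L i + ((τ i : ℕ) : ℤ) - ((i : ℕ) : ℤ) ≤ γ i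
    · rw [if_pos h, Finset.prod_eq_one (fun i _ => if_pos (h i)), mul_one]
    · rw [if_neg h]
      push_neg at h
      obtain ⟨j, hj⟩ := h
      have hz : (∏ i, (if L i + ((τ i : ℕ) : ℤ) - ((i : ℕ) : ℤ) ≤ γ i then (1:ℤ) else 0)) = 0 :=
        Finset.prod_eq_zero (Finset.mem_univ j) (if_neg (by omega))
      rw [hz, mul_zero, zero_smul]
  have step5 : ∀ γ ∈ G,
      (∑ τ : Equiv.Perm (Fin (n+1)), (Equiv.Perm.sign τ : ℤ) *
          ∏ i, (if L i + ((τ i : ℕ) : ℤ) - ((i : ℕ) : ℤ) ≤ γ i then (1:ℤ) else 0)) • Hp γ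
        = (∑ σ : Equiv.Perm (Fin n), (Equiv.Perm.sign σ : ℤ) *
            ∏ i, (if γ i.castSucc = α i + ((σ i : ℕ) : ℤ) - ((i : ℕ) : ℤ) then (1:ℤ) else 0)) • Hp γ := by
    intro γ hγ
    by_cases hlast : 0 ≤ γ (Fin.last n)
    · rw [coef_eq α L γ hLcast hLlast hlast]
    · rw [hHp0 γ (Fin.last n) (by omega), smul_zero, smul_zero]
  have step6 : ∀ γ, γ ∈ G → ∀ σ : Equiv.Perm (Fin n),
      (∏ i, (if γ i.castSucc = α i + ((σ i : ℕ) : ℤ) - ((i : ℕ) : ℤ) then (1:ℤ) else 0))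
        = if γ = Fin.snoc (fun i => α i + ((σ i : ℕ) : ℤ) - ((i : ℕ) : ℤ)) s then 1 else 0 := by
    intro γ hγ σ
    rw [hmemG] at hγ
    obtain ⟨_, hsum⟩ := hγ
    by_cases h : ∀ i : Fin n, γ i.castSucc = α i + ((σ i : ℕ) : ℤ) - ((i : ℕ) : ℤ)
    · rw [Finset.prod_eq_one (fun i _ => if_pos (h i)), if_pos]
      have hglast : γ (Fin.last n) = s := by
        rw [Fin.sum_univ_castSucc] at hsum
        have e1 : ∑ i : Fin n, γ i.castSucc
            = ∑ i : Fin n, (α i + ((σ i : ℕ) : ℤ) - ((i : ℕ) : ℤ)) :=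
          Finset.sum_congr rfl fun i _ => h i
        rw [e1, Finset.sum_sub_distrib, Finset.sum_add_distrib, sum_perm_coe] at hsum
        rw [hN] at hsum
        omega
      funext i
      induction i using Fin.lastCases with
      | last => rw [Fin.snoc_last]; exact hglast
      | cast i => rw [Fin.snoc_castSucc]; exact h i
    · push_neg at h
      obtain ⟨j, hj⟩ := h
      have hz : (∏ i, (if γ i.castSucc = α i + ((σ i : ℕ) : ℤ) - ((i : ℕ) : ℤ) then (1:ℤ) else 0)) = 0 :=
        Finset.prod_eq_zero (Finset.mem_univ j) (if_neg hj)
      rw [hz, if_neg]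
      intro hcontra
      apply hj
      rw [hcontra, Fin.snoc_castSucc]
  have step7 : ∀ (γ : Fin (n+1) → ℤ) (σ : Equiv.Perm (Fin n)),
      ((Equiv.Perm.sign σ : ℤ) *
        (if γ = Fin.snoc (fun i => α i + ((σ i : ℕ) : ℤ) - ((i : ℕ) : ℤ)) s then (1:ℤ) else 0)) • Hp γ
      = (if γ = Fin.snoc (fun i => α i + ((σ i : ℕ) : ℤ) - ((i : ℕ) : ℤ)) s
          then (Equiv.Perm.sign σ : ℤ) • Hp γ else 0) := by
    intro γ σ
    by_cases h : γ = Fin.snoc (fun i => α i + ((σ i : ℕ) : ℤ) - ((i : ℕ) : ℤ)) s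
    · rw [if_pos h, if_pos h, mul_one]
    · rw [if_neg h, if_neg h, mul_zero, zero_smul]
  have step8 : ∀ σ : Equiv.Perm (Fin n),
      (if Fin.snoc (fun i => α i + ((σ i : ℕ) : ℤ) - ((i : ℕ) : ℤ)) s ∈ G
          then (Equiv.Perm.sign σ : ℤ) •
            Hp (Fin.snoc (fun i => α i + ((σ i : ℕ) : ℤ) - ((i : ℕ) : ℤ)) s) else 0)
        = (Equiv.Perm.sign σ : ℤ) •
            Hp (Fin.snoc (fun i => α i + ((σ i : ℕ) : ℤ) - ((i : ℕ) : ℤ)) s) := by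
    intro σ
    by_cases hmem : Fin.snoc (fun i => α i + ((σ i : ℕ) : ℤ) - ((i : ℕ) : ℤ)) s ∈ G
    · rw [if_pos hmem]
    · rw [if_neg hmem]
      -- membership fails only if s < -n, in which case the product is zero
      have hsnocsum : ∑ i, Fin.snoc (fun i => α i + ((σ i : ℕ) : ℤ) - ((i : ℕ) : ℤ)) s i = N := by
        rw [Fin.sum_univ_castSucc]
        simp only [Fin.snoc_castSucc, Fin.snoc_last]
        rw [Finset.sum_sub_distrib, Finset.sum_add_distrib, sum_perm_coe, hN]
        ring
      have hsneg : s < -(n:ℤ) := by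
        by_contra hcontra
        push_neg at hcontra
        apply hmem
        rw [hmemG]
        refine ⟨fun i => ?_, hsnocsum⟩
        induction i using Fin.lastCases with
        | last =>
          rw [Fin.snoc_last, hLlast]
          have h4 : s ≤ max s 0 := le_max_left _ _
          constructor <;> omega
        | cast i =>
          rw [Fin.snoc_castSucc, hLcast]
          have h5 : (0:ℤ) ≤ max s 0 := le_max_right _ _
          have h7 : (σ i : ℕ) ≤ n := Nat.le_of_lt_succ (Nat.lt_succ_of_lt (σ i).isLt)
          have h8 : (i : ℕ) ≤ n := Nat.le_of_lt_succ (Nat.lt_succ_of_lt i.isLt)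
          constructor <;> omega
      rw [hHp0 _ (Fin.last n) (by rw [Fin.snoc_last]; omega), smul_zero]
  calc
    ∑ σ : Equiv.Perm (Fin n), (Equiv.Perm.sign σ : ℤ) •
        Hp (Fin.snoc (fun i => α i + ((σ i : ℕ) : ℤ) - ((i : ℕ) : ℤ)) s)
      = ∑ σ : Equiv.Perm (Fin n),
          (if Fin.snoc (fun i => α i + ((σ i : ℕ) : ℤ) - ((i : ℕ) : ℤ)) s ∈ G
            then (Equiv.Perm.sign σ : ℤ) •
              Hp (Fin.snoc (fun i => α i + ((σ i : ℕ) : ℤ) - ((i : ℕ) : ℤ)) s) else 0) := by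
        exact Finset.sum_congr rfl fun σ _ => (step8 σ).symm
    _ = ∑ σ : Equiv.Perm (Fin n), ∑ γ ∈ G,
          (if γ = Fin.snoc (fun i => α i + ((σ i : ℕ) : ℤ) - ((i : ℕ) : ℤ)) s
            then (Equiv.Perm.sign σ : ℤ) • Hp γ else 0) := by
        refine Finset.sum_congr rfl fun σ _ => ?_
        rw [Finset.sum_ite_eq' G _ (fun γ => (Equiv.Perm.sign σ : ℤ) • Hp γ)]
    _ = ∑ γ ∈ G, ∑ σ : Equiv.Perm (Fin n),
          (if γ = Fin.snoc (fun i => α i + ((σ i : ℕ) : ℤ) - ((i : ℕ) : ℤ)) s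
            then (Equiv.Perm.sign σ : ℤ) • Hp γ else 0) := Finset.sum_comm
    _ = ∑ γ ∈ G, (∑ σ : Equiv.Perm (Fin n), (Equiv.Perm.sign σ : ℤ) *
          ∏ i, (if γ i.castSucc = α i + ((σ i : ℕ) : ℤ) - ((i : ℕ) : ℤ) then (1:ℤ) else 0)) • Hp γ := by
        refine Finset.sum_congr rfl fun γ hγ => ?_
        rw [Finset.sum_smul]
        refine Finset.sum_congr rfl fun σ _ => ?_
        rw [step6 γ hγ σ, step7]
    _ = ∑ γ ∈ G, (∑ τ : Equiv.Perm (Fin (n+1)), (Equiv.Perm.sign τ : ℤ) *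
          ∏ i, (if L i + ((τ i : ℕ) : ℤ) - ((i : ℕ) : ℤ) ≤ γ i then (1:ℤ) else 0)) • Hp γ := by
        exact Finset.sum_congr rfl fun γ hγ => (step5 γ hγ).symm
    _ = ∑ γ ∈ G, ∑ τ : Equiv.Perm (Fin (n+1)),
          (if ∀ i, L i + ((τ i : ℕ) : ℤ) - ((i : ℕ) : ℤ) ≤ γ i
            then (Equiv.Perm.sign τ : ℤ) • Hp γ else 0) := by
        refine Finset.sum_congr rfl fun γ hγ => ?_
        rw [Finset.sum_smul]
        exact Finset.sum_congr rfl fun τ _ => (step4 γ hγ τ).symm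
    _ = ∑ τ : Equiv.Perm (Fin (n+1)), ∑ γ ∈ G,
          (if ∀ i, L i + ((τ i : ℕ) : ℤ) - ((i : ℕ) : ℤ) ≤ γ i
            then (Equiv.Perm.sign τ : ℤ) • Hp γ else 0) := Finset.sum_comm
    _ = ∑ τ : Equiv.Perm (Fin (n+1)), ∑ β ∈ t, (Equiv.Perm.sign τ : ℤ) •
          Hp (fun i => β i + ((τ i : ℕ) : ℤ) - ((i : ℕ) : ℤ)) := by
        exact Finset.sum_congr rfl fun τ _ => (step3 τ).symm
    _ = ∑ β ∈ t, immac k β := step2.symm
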